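/- For a connected (m+1)-uniform undirected hypergraph G with sparsity s and vertex connectivity v(G), the algebraic connectivity satisfies a(G) ≤ (2m−1)·s·v(G). -/

import Mathlib

open Finset

/-- `∑_{i<j, v_i,v_j ∈ e} (x_i - x_j)^2`, the Laplacian quadratic form of a single hyperedge. -/
def pairSum {n : ℕ} (e : Finset (Fin n)) (x : Fin n → ℝ) : ℝ :=
  ∑ i ∈ e, ∑ j ∈ e, if i < j then (x i - x j)^2 else 0

/-- The Laplacian quadratic form `x^T L x = ∑_{E ∈ Es} ∑_{i<j ∈ E} (x_i - x_j)^2`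
of a uniform undirected hypergraph under the compatible tensor product. -/
def Qform {n : ℕ} (Es : Finset (Finset (Fin n))) (x : Fin n → ℝ) : ℝ :=
  ∑ e ∈ Es, pairSum e x

/-- Algebraic connectivity of a hypergraph on the vertex set `V`:
`a(G) = min { x^T L x : x ⊥ 1, ‖x‖₂ = 1 }`, the vectors being supported on `V`. -/
noncomputable def algConOn {n : ℕ} (V : Finset (Fin n))
    (Es : Finset (Finset (Fin n))) : ℝ :=
  sInf {y : ℝ | ∃ x : Fin n → ℝ, (∀ i ∉ V, x i = 0) ∧ (∑ i ∈ V, x i = 0) ∧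
    (∑ i ∈ V, (x i)^2 = 1) ∧ y = Qform Es x}

/-- Connectivity of the hypergraph on the whole vertex set. -/
def HConnected {n : ℕ} (Es : Finset (Finset (Fin n))) : Prop :=
  ∀ u v : Fin n, Relation.ReflTransGen (fun a b => ∃ e ∈ Es, a ∈ e ∧ b ∈ e) u v

/-- `S` is a cutset: after removing the vertices of `S` and all hyperedges meeting `S`,
some two remaining vertices are no longer joined by a hyperpath. -/
def IsCutset {n : ℕ} (Es : Finset (Finset (Fin n))) (S : Finset (Fin n)) : Prop :=
  ∃ u v : Fin n, u ∉ S ∧ v ∉ S ∧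
    ¬ Relation.ReflTransGen
        (fun a b => a ∉ S ∧ b ∉ S ∧ ∃ e ∈ Es, e ∩ S = ∅ ∧ a ∈ e ∧ b ∈ e) u v

lemma pairSum_nonneg {n : ℕ} (e : Finset (Fin n)) (x : Fin n → ℝ) : 0 ≤ pairSum e x := by
  refine Finset.sum_nonneg fun i _ => Finset.sum_nonneg fun j _ => ?_
  split <;> positivity

lemma pairSum_const {n : ℕ} (e : Finset (Fin n)) (x : Fin n → ℝ)
    (h : ∀ i ∈ e, ∀ j ∈ e, x i = x j) : pairSum e x = 0 := by
  refine Finset.sum_eq_zero fun i hi => Finset.sum_eq_zero fun j hj => ?_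
  rw [h i hi j hj]
  simp

lemma pairSum_eq {n : ℕ} (e : Finset (Fin n)) (x : Fin n → ℝ) :
    pairSum e x = e.card * ∑ i ∈ e, (x i)^2 - (∑ i ∈ e, x i)^2 := by
  have h2 : ∑ i ∈ e, ∑ j ∈ e, (x i - x j)^2 = 2 * pairSum e x := by
    have hs : ∀ i ∈ e, ∀ j ∈ e, (x i - x j)^2 =
        (if i < j then (x i - x j)^2 else 0) + (if j < i then (x i - x j)^2 else 0) := by
      intro i _ j _
      rcases lt_trichotomy i j with h|h|h
      · simp [h, h.asymm]
      · subst h; simp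
      · simp [h, h.asymm]
    calc ∑ i ∈ e, ∑ j ∈ e, (x i - x j)^2
        = ∑ i ∈ e, ∑ j ∈ e, ((if i < j then (x i - x j)^2 else 0)
            + (if j < i then (x i - x j)^2 else 0)) :=
          Finset.sum_congr rfl fun i hi => Finset.sum_congr rfl fun j hj => hs i hi j hj
      _ = pairSum e x + ∑ i ∈ e, ∑ j ∈ e, (if j < i then (x i - x j)^2 else 0) := by
          simp only [Finset.sum_add_distrib]
          rfl
      _ = 2 * pairSum e x := by
          rw [Finset.sum_comm]
          have : ∑ j ∈ e, ∑ i ∈ e, (if j < i then (x i - x j)^2 else 0) = pairSum e x := by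
            refine Finset.sum_congr rfl fun j hj => Finset.sum_congr rfl fun i hi => ?_
            congr 1
            ring
          rw [this]; ring
  have h3 : ∑ i ∈ e, ∑ j ∈ e, (x i - x j)^2
      = e.card * ∑ i ∈ e, (x i)^2 - 2*(∑ i ∈ e, x i)^2 + e.card * ∑ i ∈ e, (x i)^2 := by
    have inner : ∀ i, ∑ j ∈ e, (x i - x j)^2
        = e.card * (x i)^2 - 2 * x i * (∑ j ∈ e, x j) + ∑ j ∈ e, (x j)^2 := by
      intro i
      have : ∀ j, (x i - x j)^2 = (x i)^2 - 2 * x i * x j + (x j)^2 := fun j => by ring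
      simp_rw [this]
      rw [Finset.sum_add_distrib, Finset.sum_sub_distrib, ← Finset.mul_sum,
        Finset.sum_const, nsmul_eq_mul]
    simp_rw [inner]
    rw [Finset.sum_add_distrib, Finset.sum_sub_distrib, ← Finset.mul_sum,
      ← Finset.sum_mul, Finset.sum_const, nsmul_eq_mul]
    have h4 : (∑ j ∈ e, 2 * x j) = 2 * ∑ j ∈ e, x j := by rw [Finset.mul_sum]
    rw [h4]
    ring
  linarith [h2, h3]

lemma edge_bound {n m : ℕ} (hm : 1 ≤ m) (e S : Finset (Fin n)) (x : Fin n → ℝ)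
    (hcard : e.card = m + 1) (hxS : ∀ i ∈ S, x i = 0) (hne : (e ∩ S).Nonempty) :
    pairSum e x ≤ (2*(m:ℝ) - 1) * (e ∩ S).card * ∑ j ∈ e \ S, (x j)^2 := by
  have hsplit : (e ∩ S).card + (e \ S).card = e.card := Finset.card_inter_add_card_sdiff e S
  have hp1 : 1 ≤ (e ∩ S).card := hne.card_pos
  have hsum2 : ∑ i ∈ e, (x i)^2 = ∑ j ∈ e \ S, (x j)^2 := by
    rw [← Finset.sum_inter_add_sum_sdiff e S (fun i => (x i)^2)]
    rw [Finset.sum_eq_zero fun i hi => by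
      rw [hxS i (Finset.mem_inter.mp hi).2]; ring]
    ring
  have hsum1 : ∑ i ∈ e, x i = ∑ j ∈ e \ S, x j := by
    rw [← Finset.sum_inter_add_sum_sdiff e S (fun i => x i)]
    rw [Finset.sum_eq_zero fun i hi => hxS i (Finset.mem_inter.mp hi).2]
    ring
  have hQnn : 0 ≤ ∑ j ∈ e \ S, (x j)^2 :=
    Finset.sum_nonneg fun j _ => sq_nonneg _
  have hpR : (1:ℝ) ≤ ((e ∩ S).card : ℝ) := by exact_mod_cast hp1
  have hmR : (1:ℝ) ≤ (m:ℝ) := by exact_mod_cast hm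
  rw [pairSum_eq, hcard, hsum2, hsum1]
  push_cast
  rcases Nat.lt_or_ge (e \ S).card 2 with ht | ht
  · interval_cases h : (e \ S).card
    · have hT : e \ S = ∅ := Finset.card_eq_zero.mp h
      simp [hT]
    · obtain ⟨j, hj⟩ := Finset.card_eq_one.mp h
      rw [hj]
      simp only [Finset.sum_singleton]
      have key : (m:ℝ) ≤ (2*(m:ℝ)-1) * ((e ∩ S).card : ℝ) := by nlinarith
      nlinarith [mul_le_mul_of_nonneg_right key (sq_nonneg (x j))]
  · have hm2 : 2 ≤ m := by omega
    have hm2R : (2:ℝ) ≤ (m:ℝ) := by exact_mod_cast hm2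
    have key : (m:ℝ) + 1 ≤ (2*(m:ℝ)-1) * ((e ∩ S).card : ℝ) := by
      nlinarith [mul_nonneg (by linarith : (0:ℝ) ≤ 2*(m:ℝ)-1) (by linarith : (0:ℝ) ≤ ((e ∩ S).card : ℝ) - 1)]
    nlinarith [sq_nonneg (∑ j ∈ e \ S, x j), mul_le_mul_of_nonneg_right key hQnn]

lemma double_count {n s : ℕ} (Es : Finset (Finset (Fin n))) (S : Finset (Fin n))
    (x : Fin n → ℝ)
    (hs : ∀ i j : Fin n, i ≠ j → (Es.filter (fun e => i ∈ e ∧ j ∈ e)).card ≤ s)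
    (hx : ∑ i, (x i)^2 = 1) :
    ∑ e ∈ Es, ((e ∩ S).card : ℝ) * ∑ j ∈ e \ S, (x j)^2 ≤ (s : ℝ) * S.card := by
  classical
  have step1 : ∀ e : Finset (Fin n), ((e ∩ S).card : ℝ) * ∑ j ∈ e \ S, (x j)^2
      = ∑ i ∈ S, ∑ j ∈ Finset.univ \ S, (if i ∈ e ∧ j ∈ e then (x j)^2 else 0) := by
    intro e
    have h1 : ((e ∩ S).card : ℝ) * ∑ j ∈ e \ S, (x j)^2
        = ∑ i ∈ e ∩ S, ∑ j ∈ e \ S, (x j)^2 := by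
      rw [Finset.sum_const, nsmul_eq_mul]
    rw [h1]
    have h2 : e ∩ S = S ∩ e := Finset.inter_comm e S
    have h3 : e \ S = (Finset.univ \ S) ∩ e := by
      ext j; simp [Finset.mem_sdiff, Finset.mem_inter, and_comm]
    rw [h2, h3, ← Finset.sum_ite_mem S e]
    refine Finset.sum_congr rfl fun i _ => ?_
    rw [← Finset.sum_ite_mem (Finset.univ \ S) e (fun j => (x j)^2)]
    by_cases hie : i ∈ e
    · simp only [hie, if_true, true_and]
    · simp [hie]
  calc ∑ e ∈ Es, ((e ∩ S).card : ℝ) * ∑ j ∈ e \ S, (x j)^2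
      = ∑ e ∈ Es, ∑ i ∈ S, ∑ j ∈ Finset.univ \ S, (if i ∈ e ∧ j ∈ e then (x j)^2 else 0) :=
        Finset.sum_congr rfl fun e _ => step1 e
    _ = ∑ i ∈ S, ∑ j ∈ Finset.univ \ S, ∑ e ∈ Es, (if i ∈ e ∧ j ∈ e then (x j)^2 else 0) := by
        rw [Finset.sum_comm]
        refine Finset.sum_congr rfl fun i _ => ?_
        rw [Finset.sum_comm]
    _ ≤ ∑ i ∈ S, ∑ j ∈ Finset.univ \ S, (s : ℝ) * (x j)^2 := by
        refine Finset.sum_le_sum fun i hi => Finset.sum_le_sum fun j hj => ?_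
        have hij : i ≠ j := by
          intro h
          rw [Finset.mem_sdiff] at hj
          exact hj.2 (h ▸ hi)
        have hcount : ∑ e ∈ Es, (if i ∈ e ∧ j ∈ e then (x j)^2 else 0)
            = ((Es.filter (fun e => i ∈ e ∧ j ∈ e)).card : ℝ) * (x j)^2 := by
          rw [← Finset.sum_filter, Finset.sum_const, nsmul_eq_mul]
        rw [hcount]
        have : ((Es.filter (fun e => i ∈ e ∧ j ∈ e)).card : ℝ) ≤ (s : ℝ) := by
          exact_mod_cast hs i j hij
        exact mul_le_mul_of_nonneg_right this (sq_nonneg _)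
    _ = (S.card : ℝ) * ((s:ℝ) * ∑ j ∈ Finset.univ \ S, (x j)^2) := by
        rw [Finset.sum_const, nsmul_eq_mul, Finset.mul_sum]
        rw [Finset.mul_sum, Finset.mul_sum]
    _ ≤ (S.card : ℝ) * ((s:ℝ) * 1) := by
        refine mul_le_mul_of_nonneg_left (mul_le_mul_of_nonneg_left ?_ (by positivity))
          (by positivity)
        rw [← hx]
        exact Finset.sum_le_sum_of_subset_of_nonneg (Finset.sdiff_subset)
          (fun j _ _ => sq_nonneg _)
    _ = (s : ℝ) * S.card := by ring

/-- For a connected (m+1)-uniform hypergraph `G` with sparsity `s` and vertex connectivity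
`v(G)` (the least cardinality of a cutset), `a(G) ≤ (2m-1)·s·v(G)`. -/
theorem stmt8 {n m s v : ℕ} (Es : Finset (Finset (Fin n)))
    (hU : ∀ e ∈ Es, e.card = m + 1) (hconn : HConnected Es)
    (hs : ∀ i j : Fin n, i ≠ j → (Es.filter (fun e => i ∈ e ∧ j ∈ e)).card ≤ s)
    (hv : IsLeast {k : ℕ | ∃ S : Finset (Fin n), S.card = k ∧ IsCutset Es S} v) :
    algConOn Finset.univ Es ≤ (2 * (m : ℝ) - 1) * s * v := by
  classical
  obtain ⟨⟨S, hScard, u, w, huS, hwS, hnr⟩, -⟩ := hv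
  rcases Nat.eq_zero_or_pos m with hm0 | hm
  · -- m = 0: each edge is a singleton, so connectivity forces u = w, contradiction
    exfalso
    apply hnr
    have key : ∀ p q : Fin n,
        Relation.ReflTransGen (fun a b => ∃ e ∈ Es, a ∈ e ∧ b ∈ e) p q → p = q := by
      intro p q h
      induction h with
      | refl => rfl
      | tail h1 h2 ih =>
        obtain ⟨e, he, hae, hbe⟩ := h2
        have hc : e.card = 1 := by rw [hU e he, hm0]
        obtain ⟨z, hz⟩ := Finset.card_eq_one.mp hc
        subst hz
        rw [Finset.mem_singleton] at hae hbe
        rw [ih, hae, hbe]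
    have huw : u = w := key u w (hconn u w)
    exact huw ▸ Relation.ReflTransGen.refl
  · set R : Fin n → Fin n → Prop :=
      fun a b => a ∉ S ∧ b ∉ S ∧ ∃ e ∈ Es, e ∩ S = ∅ ∧ a ∈ e ∧ b ∈ e with hR
    set A : Finset (Fin n) :=
      Finset.univ.filter (fun i => Relation.ReflTransGen R u i) with hA
    set B : Finset (Fin n) := (Finset.univ \ S) \ A with hB
    have hmemA : ∀ i, i ∈ A ↔ Relation.ReflTransGen R u i := by
      intro i; rw [hA, Finset.mem_filter]; simp
    have hAS : ∀ i ∈ A, i ∉ S := by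
      intro i hi
      rcases ((hmemA i).mp hi).cases_tail with h | ⟨c, _, hc⟩
      · exact h ▸ huS
      · exact hc.2.1
    have huA : u ∈ A := (hmemA u).mpr Relation.ReflTransGen.refl
    have hwB : w ∈ B := by
      rw [hB]
      simp only [Finset.mem_sdiff, Finset.mem_univ, true_and]
      exact ⟨hwS, fun hw => hnr ((hmemA w).mp hw)⟩
    have hBS : ∀ i ∈ B, i ∉ S := by
      intro i hi; rw [hB] at hi; simp only [Finset.mem_sdiff] at hi; exact hi.1.2
    have hBA : ∀ i ∈ B, i ∉ A := by
      intro i hi; rw [hB] at hi; simp only [Finset.mem_sdiff] at hi; exact hi.2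
    have haN : 0 < A.card := Finset.card_pos.mpr ⟨u, huA⟩
    have hbN : 0 < B.card := Finset.card_pos.mpr ⟨w, hwB⟩
    set a : ℝ := (A.card : ℝ) with ha_def
    set b : ℝ := (B.card : ℝ) with hb_def
    have ha : 0 < a := by rw [ha_def]; exact_mod_cast haN
    have hb : 0 < b := by rw [hb_def]; exact_mod_cast hbN
    set N : ℝ := a * b * (a + b) with hN_def
    have hN : 0 < N := by rw [hN_def]; exact mul_pos (mul_pos ha hb) (by linarith)
    set c : ℝ := Real.sqrt N with hc_def
    have hc : 0 < c := Real.sqrt_pos.mpr hN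
    have hc2 : c^2 = N := Real.sq_sqrt hN.le
    set x : Fin n → ℝ :=
      fun i => (if i ∈ A then b else if i ∈ B then -a else 0) / c with hx_def
    have hxA : ∀ i ∈ A, x i = b / c := by intro i hi; simp [hx_def, hi]
    have hxB : ∀ i ∈ B, x i = -a / c := by
      intro i hi
      have : i ∉ A := hBA i hi
      simp [hx_def, hi, this]
    have hxS : ∀ i ∈ S, x i = 0 := by
      intro i hi
      have h1 : i ∉ A := fun h => hAS i h hi
      have h2 : i ∉ B := fun h => hBS i h hi
      simp [hx_def, h1, h2]
    have hx0 : ∀ i, i ∉ A → i ∉ B → x i = 0 := by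
      intro i h1 h2; simp [hx_def, h1, h2]
    have hdisj : Disjoint A B := by
      rw [Finset.disjoint_right]
      exact hBA
    -- sum zero
    have hsub : A ∪ B ⊆ Finset.univ := Finset.subset_univ _
    have hsumsplit : ∀ f : Fin n → ℝ, (∀ i, i ∉ A → i ∉ B → f i = 0) →
        ∑ i, f i = ∑ i ∈ A, f i + ∑ i ∈ B, f i := by
      intro f hf
      rw [← Finset.sum_union hdisj, ← Finset.sum_sdiff hsub]
      have : ∑ i ∈ Finset.univ \ (A ∪ B), f i = 0 := by
        refine Finset.sum_eq_zero fun i hi => ?_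
        rw [Finset.mem_sdiff, Finset.mem_union] at hi
        push_neg at hi
        exact hf i hi.2.1 hi.2.2
      rw [this, zero_add]
    have hsum0 : ∑ i, x i = 0 := by
      rw [hsumsplit x hx0,
        Finset.sum_congr rfl (fun i hi => hxA i hi),
        Finset.sum_congr rfl (fun i hi => hxB i hi),
        Finset.sum_const, Finset.sum_const, nsmul_eq_mul, nsmul_eq_mul,
        ← ha_def, ← hb_def]
      rw [← mul_div_assoc, ← mul_div_assoc, ← add_div,
        show a * b + b * -a = 0 by ring, zero_div]
    have hnorm : ∑ i, (x i)^2 = 1 := by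
      have h1 : ∑ i, (x i)^2 = ∑ i ∈ A, (x i)^2 + ∑ i ∈ B, (x i)^2 := by
        refine hsumsplit (fun i => (x i)^2) fun i h1 h2 => ?_
        show x i ^ 2 = 0
        rw [hx0 i h1 h2]; ring
      have hsA : ∑ i ∈ A, (x i)^2 = a * (b/c)^2 := by
        have he : ∀ i ∈ A, (x i)^2 = (b/c)^2 := fun i hi => by rw [hxA i hi]
        rw [Finset.sum_congr rfl he, Finset.sum_const, nsmul_eq_mul, ← ha_def]
      have hsB : ∑ i ∈ B, (x i)^2 = b * (-a/c)^2 := by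
        have he : ∀ i ∈ B, (x i)^2 = (-a/c)^2 := fun i hi => by rw [hxB i hi]
        rw [Finset.sum_congr rfl he, Finset.sum_const, nsmul_eq_mul, ← hb_def]
      rw [h1, hsA, hsB]
      have hceq : a * (b/c)^2 + b * (-a/c)^2 = (a*b*(a+b)) / c^2 := by
        rw [div_pow, div_pow, neg_sq, ← mul_div_assoc, ← mul_div_assoc, ← add_div,
          show a * b^2 + b * a^2 = a*b*(a+b) by ring]
      rw [hceq, hc2, hN_def]
      exact div_self (ne_of_gt (mul_pos (mul_pos ha hb) (by linarith)))
    -- Q form bound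
    have hedge : ∀ e ∈ Es,
        pairSum e x ≤ (2*(m:ℝ) - 1) * ((e ∩ S).card : ℝ) * ∑ j ∈ e \ S, (x j)^2 := by
      intro e he
      by_cases hES : e ∩ S = ∅
      · -- edge avoiding S: x is constant on e
        have hzero : pairSum e x = 0 := by
          have heS : ∀ j ∈ e, j ∉ S := by
            intro j hj hjS
            exact Finset.notMem_empty j (hES ▸ Finset.mem_inter.mpr ⟨hj, hjS⟩)
          by_cases hEA : (e ∩ A).Nonempty
          · obtain ⟨i0, hi0⟩ := hEA
            rw [Finset.mem_inter] at hi0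
            have hall : ∀ j ∈ e, j ∈ A := by
              intro j hj
              refine (hmemA j).mpr (Relation.ReflTransGen.tail ((hmemA i0).mp hi0.2) ?_)
              exact ⟨hAS i0 hi0.2, heS j hj, e, he, hES, hi0.1, hj⟩
            refine pairSum_const e x fun i hi j hj => ?_
            rw [hxA i (hall i hi), hxA j (hall j hj)]
          · have hall : ∀ j ∈ e, j ∈ B := by
              intro j hj
              rw [hB]
              simp only [Finset.mem_sdiff, Finset.mem_univ, true_and]
              refine ⟨heS j hj, fun hjA => hEA ⟨j, Finset.mem_inter.mpr ⟨hj, hjA⟩⟩⟩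
            refine pairSum_const e x fun i hi j hj => ?_
            rw [hxB i (hall i hi), hxB j (hall j hj)]
        rw [hzero, hES]
        simp only [Finset.card_empty, Nat.cast_zero, mul_zero, zero_mul]
        positivity
      · exact edge_bound hm e S x (hU e he) hxS (Finset.nonempty_iff_ne_empty.mpr hES)
    have hmR : (1:ℝ) ≤ (m:ℝ) := by exact_mod_cast hm
    have hQbound : Qform Es x ≤ (2*(m:ℝ) - 1) * s * v := by
      calc Qform Es x ≤ ∑ e ∈ Es, (2*(m:ℝ) - 1) * ((e ∩ S).card : ℝ) * ∑ j ∈ e \ S, (x j)^2 :=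
            Finset.sum_le_sum hedge
        _ = (2*(m:ℝ) - 1) * ∑ e ∈ Es, ((e ∩ S).card : ℝ) * ∑ j ∈ e \ S, (x j)^2 := by
            rw [Finset.mul_sum]
            exact Finset.sum_congr rfl fun e _ => by ring
        _ ≤ (2*(m:ℝ) - 1) * ((s:ℝ) * S.card) := by
            refine mul_le_mul_of_nonneg_left (double_count Es S x hs hnorm) (by linarith)
        _ = (2*(m:ℝ) - 1) * s * v := by rw [hScard]; ring
    -- conclude
    have hmem : Qform Es x ∈ {y : ℝ | ∃ x : Fin n → ℝ,
        (∀ i ∉ (Finset.univ : Finset (Fin n)), x i = 0) ∧ (∑ i, x i = 0) ∧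
        (∑ i, (x i)^2 = 1) ∧ y = Qform Es x} :=
      ⟨x, fun i hi => absurd (Finset.mem_univ i) hi, hsum0, hnorm, rfl⟩
    have hbdd : BddBelow {y : ℝ | ∃ x : Fin n → ℝ,
        (∀ i ∉ (Finset.univ : Finset (Fin n)), x i = 0) ∧ (∑ i, x i = 0) ∧
        (∑ i, (x i)^2 = 1) ∧ y = Qform Es x} := by
      refine ⟨0, fun y hy => ?_⟩
      obtain ⟨z, -, -, -, hz⟩ := hy
      rw [hz]
      exact Finset.sum_nonneg fun e _ => pairSum_nonneg e z
    calc algConOn Finset.univ Es ≤ Qform Es x := csInf_le hbdd hmem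
      _ ≤ (2 * (m : ℝ) - 1) * s * v := hQbound
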